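/- For probability mass functions P and Q on a finite alphabet Z with P absolutely continuous with respect to Q, and for the mixture W_α = α·P + (1-α)·Q with α ∈ (0,1), the KL divergence D(W_α ‖ Q) is at most (α²/2)·χ₂(P‖Q)·(1 + √α) for all sufficiently small α, where χ₂(P‖Q) = Σ_z (P(z)-Q(z))²/Q(z). -/

import Mathlib

open Filter Real

noncomputable def KL {Z : Type*} [Fintype Z] (P Q : Z → ℝ) : ℝ :=
  ∑ z, P z * Real.log (P z / Q z)

noncomputable def chi2 {Z : Type*} [Fintype Z] (P Q : Z → ℝ) : ℝ :=
  ∑ z, (P z - Q z)^2 / Q z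

def IsPMF {Z : Type*} [Fintype Z] (P : Z → ℝ) : Prop :=
  (∀ z, 0 ≤ P z) ∧ ∑ z, P z = 1

/-- absolute continuity `P ≪ Q` for pmfs on a finite alphabet -/
def AC {Z : Type*} [Fintype Z] (P Q : Z → ℝ) : Prop := ∀ z, Q z = 0 → P z = 0


lemma key {δ t : ℝ} (hδ0 : 0 ≤ δ) (hδ1 : δ < 1) (ht : -δ ≤ t) :
    (1+t) * Real.log (1+t) ≤ t + t^2/(2*(1-δ)) := by
  have h1δ : (0:ℝ) < 1 - δ := by linarith
  set h : ℝ → ℝ := fun x => x + x^2/(2*(1-δ)) - (1+x)*Real.log (1+x) with hh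
  have hderiv : ∀ x : ℝ, -1 < x → HasDerivAt h (x/(1-δ) - Real.log (1+x)) x := by
    intro x hx
    have hx1 : (0:ℝ) < 1 + x := by linarith
    have hlog : HasDerivAt (fun y : ℝ => Real.log (1+y)) ((1+x)⁻¹) x := by
      have := (Real.hasDerivAt_log hx1.ne').comp x ((hasDerivAt_id x).const_add 1)
      exact this.congr_deriv (mul_one _)
    have hmul : HasDerivAt (fun y : ℝ => (1+y)*Real.log (1+y))
        (1 * Real.log (1+x) + (1+x) * (1+x)⁻¹) x :=
      ((hasDerivAt_id x).const_add 1).mul hlog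
    have hpoly : HasDerivAt (fun y : ℝ => y + y^2/(2*(1-δ)))
        (1 + (2*x)/(2*(1-δ))) x := by
      have := ((hasDerivAt_pow 2 x).div_const (2*(1-δ))).const_add 0
      have h2 := (hasDerivAt_id x).add ((hasDerivAt_pow 2 x).div_const (2*(1-δ)))
      exact h2.congr_deriv (by norm_num)
    have := hpoly.sub hmul
    refine this.congr_deriv ?_
    rw [mul_inv_cancel₀ hx1.ne']
    field_simp
    ring
  have h0 : h 0 = 0 := by simp [hh]
  have key0 : h 0 ≤ h t := by
    rcases le_or_gt 0 t with hcase | hcase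
    · have hmono : MonotoneOn h (Set.Ici (0:ℝ)) := by
        apply monotoneOn_of_deriv_nonneg (convex_Ici 0)
        · intro x hx
          exact (hderiv x (by simp at hx; linarith)).differentiableAt.continuousAt.continuousWithinAt
        · intro x hx
          rw [interior_Ici] at hx
          exact (hderiv x (by simp at hx; linarith)).differentiableAt.differentiableWithinAt
        · intro x hx
          rw [interior_Ici] at hx
          have hx0 : (0:ℝ) < x := hx
          rw [(hderiv x (by linarith)).deriv]
          have hlogle : Real.log (1+x) ≤ x := by
            have := Real.log_le_sub_one_of_pos (show (0:ℝ) < 1+x by linarith)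
            linarith
          have : x ≤ x/(1-δ) := by
            rw [le_div_iff₀ h1δ]; nlinarith
          linarith
      exact hmono (Set.self_mem_Ici) (Set.mem_Ici.2 hcase) hcase
    · have hanti : AntitoneOn h (Set.Icc (-δ) 0) := by
        apply antitoneOn_of_deriv_nonpos (convex_Icc _ _)
        · intro x hx
          exact (hderiv x (by simp at hx; linarith [hx.1])).differentiableAt.continuousAt.continuousWithinAt
        · intro x hx
          rw [interior_Icc] at hx
          exact (hderiv x (by linarith [hx.1])).differentiableAt.differentiableWithinAt
        · intro x hx
          rw [interior_Icc] at hx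
          obtain ⟨hx1, hx2⟩ := hx
          rw [(hderiv x (by linarith)).deriv]
          have hx1' : (0:ℝ) < 1 + x := by linarith
          have hlogge : x/(1+x) ≤ Real.log (1+x) := by
            have := Real.log_le_sub_one_of_pos (show (0:ℝ) < (1+x)⁻¹ by positivity)
            rw [Real.log_inv] at this
            have h2 : (1+x)⁻¹ - 1 = -(x/(1+x)) := by field_simp; ring
            rw [h2] at this
            linarith
          have : x/(1-δ) ≤ x/(1+x) := by
            rw [div_le_div_iff₀ h1δ hx1']
            nlinarith
          linarith
      exact hanti (Set.mem_Icc.2 ⟨ht, hcase.le⟩) (Set.mem_Icc.2 ⟨by linarith, le_refl 0⟩) hcase.le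
  rw [h0, hh] at key0
  simp only at key0
  linarith

/-- for sufficiently small `α ∈ (0,1)`,
`D(αP+(1-α)Q ‖ Q) ≤ (α²/2)·χ₂(P‖Q)·(1+√α)`. -/
theorem stmt0 {Z : Type*} [Fintype Z] (P Q : Z → ℝ)
    (hP : IsPMF P) (hQ : IsPMF Q) (hAC : AC P Q) :
    ∃ α₀ > (0:ℝ), ∀ α : ℝ, 0 < α → α < 1 → α ≤ α₀ →
      KL (fun z => α * P z + (1 - α) * Q z) Q ≤
        α ^ 2 / 2 * chi2 P Q * (1 + Real.sqrt α) := by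
  classical
  set M : ℝ := ∑ z, |P z - Q z| / Q z with hM
  have hMterm : ∀ z, |P z - Q z| / Q z ≤ M := by
    intro z
    exact Finset.single_le_sum (f := fun i => |P i - Q i| / Q i)
      (fun i _ => div_nonneg (abs_nonneg _) (hQ.1 i)) (Finset.mem_univ z)
  have hM0 : 0 ≤ M :=
    Finset.sum_nonneg (fun i _ => div_nonneg (abs_nonneg _) (hQ.1 i))
  refine ⟨1/(2*M+1)^2, by positivity, ?_⟩
  intro α hα0 hα1 hα₀
  set s := Real.sqrt α with hs
  have hs0 : 0 < s := Real.sqrt_pos.2 hα0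
  have hs2 : s^2 = α := Real.sq_sqrt hα0.le
  have hsle : s ≤ 1/(2*M+1) := by
    rw [hs]
    have : (1/(2*M+1))^2 = 1/(2*M+1)^2 := one_div_pow _ _
    calc Real.sqrt α ≤ Real.sqrt (1/(2*M+1)^2) := Real.sqrt_le_sqrt hα₀
      _ = 1/(2*M+1) := by rw [← this, Real.sqrt_sq (by positivity)]
  have hsM : s*(2*M+1) ≤ 1 := by
    rw [le_div_iff₀ (by positivity)] at hsle; linarith [hsle]
  have hs1 : s ≤ 1 := by nlinarith
  set δ := α * M with hδ
  have hδ0 : 0 ≤ δ := by positivity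
  have hδhalf : δ ≤ 1/2 := by
    have : δ = s^2*M := by rw [hδ, hs2]
    nlinarith
  have hδ1 : δ < 1 := by linarith
  have h1δ : (0:ℝ) < 1 - δ := by linarith
  -- the key comparison 1/(1-δ) ≤ 1 + s
  have hcomp : 1 ≤ (1-δ)*(1+s) := by
    have hδs : δ = s^2*M := by rw [hδ, hs2]
    nlinarith [hs0.le, hs2, hsM, hs1]
  -- termwise bound
  have hterm : ∀ z ∈ Finset.univ (α := Z),
      (α * P z + (1-α) * Q z) * Real.log ((α * P z + (1-α)*Q z)/Q z) ≤
      α * (P z - Q z) + (P z - Q z)^2/Q z * (α^2/(2*(1-δ))) := by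
    intro z _
    rcases eq_or_lt_of_le (hQ.1 z) with hQz | hQz
    · have hPz : P z = 0 := hAC z hQz.symm
      simp [← hQz, hPz]
    · set t := α * (P z - Q z)/Q z with htdef
      have habs : |t| ≤ δ := by
        rw [htdef, hδ]
        rw [abs_div, abs_mul, abs_of_pos hα0, abs_of_pos hQz, mul_div_assoc]
        exact mul_le_mul_of_nonneg_left (hMterm z) hα0.le
      have ht1 : -δ ≤ t := neg_le_of_abs_le habs
      have hk := key hδ0 hδ1 ht1
      have hW : α * P z + (1-α) * Q z = Q z * (1 + t) := by
        rw [htdef]; field_simp; ring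
      have hWQ : (α * P z + (1-α)*Q z)/Q z = 1 + t := by
        rw [hW, mul_div_assoc, mul_comm]
        field_simp
      rw [hWQ, hW, mul_assoc]
      have := mul_le_mul_of_nonneg_left hk hQz.le
      calc Q z * ((1+t) * Real.log (1+t)) ≤ Q z * (t + t^2/(2*(1-δ))) := this
        _ = α * (P z - Q z) + (P z - Q z)^2/Q z * (α^2/(2*(1-δ))) := by
            rw [htdef]; field_simp
  have hsum := Finset.sum_le_sum hterm
  have hKL : KL (fun z => α * P z + (1 - α) * Q z) Q =
      ∑ z, (α * P z + (1-α) * Q z) * Real.log ((α * P z + (1-α)*Q z)/Q z) := rfl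
  have hsum1 : ∑ z, (α * (P z - Q z) + (P z - Q z)^2/Q z * (α^2/(2*(1-δ))))
      = chi2 P Q * (α^2/(2*(1-δ))) := by
    rw [Finset.sum_add_distrib, ← Finset.mul_sum, ← Finset.sum_mul,
      Finset.sum_sub_distrib, hP.2, hQ.2]
    simp [chi2]
  have hchi : 0 ≤ chi2 P Q :=
    Finset.sum_nonneg (fun i _ => div_nonneg (sq_nonneg _) (hQ.1 i))
  have hfinal : chi2 P Q * (α^2/(2*(1-δ))) ≤ α ^ 2 / 2 * chi2 P Q * (1 + s) := by
    have hle : α^2/(2*(1-δ)) ≤ α^2/2 * (1+s) := by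
      rw [div_le_iff₀ (by positivity)]
      have : α^2/2 * (1+s) * (2*(1-δ)) = α^2 * ((1-δ)*(1+s)) := by ring
      rw [this]
      nlinarith [sq_nonneg α, hcomp]
    calc chi2 P Q * (α^2/(2*(1-δ))) ≤ chi2 P Q * (α^2/2 * (1+s)) :=
          mul_le_mul_of_nonneg_left hle hchi
      _ = α ^ 2 / 2 * chi2 P Q * (1 + s) := by ring
  rw [hKL]
  calc (∑ z, (α * P z + (1-α) * Q z) * Real.log ((α * P z + (1-α)*Q z)/Q z))
      ≤ ∑ z, (α * (P z - Q z) + (P z - Q z)^2/Q z * (α^2/(2*(1-δ)))) := hsum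
    _ = chi2 P Q * (α^2/(2*(1-δ))) := hsum1
    _ ≤ α ^ 2 / 2 * chi2 P Q * (1 + Real.sqrt α) := hfinal
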